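/- For every constant C with 1/e ≤ C ≤ (e + 1/e)/2, the open disc {w ∈ ℂ : |w - C| < C - 1/e} is contained in the region {w ∈ ℂ : w ≠ 0 and |log w| < 1}, where log denotes the principal branch of the complex logarithm. -/

import Mathlib

open Complex Real

private lemma sinh_le_mul_cosh {x : ℝ} (hx : 0 ≤ x) : Real.sinh x ≤ x * Real.cosh x := by
  have mono : MonotoneOn (fun t : ℝ => t * Real.cosh t - Real.sinh t) (Set.Ici 0) := by
    have hd : ∀ t : ℝ, HasDerivAt (fun t : ℝ => t * Real.cosh t - Real.sinh t)
        (1 * Real.cosh t + t * Real.sinh t - Real.cosh t) t := fun t =>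
      ((hasDerivAt_id t).mul (Real.hasDerivAt_cosh t)).sub (Real.hasDerivAt_sinh t)
    apply monotoneOn_of_deriv_nonneg (convex_Ici 0)
    · exact ((continuous_id.mul Real.continuous_cosh).sub Real.continuous_sinh).continuousOn
    · intro t _
      exact (hd t).differentiableAt.differentiableWithinAt
    · intro t ht
      rw [interior_Ici, Set.mem_Ioi] at ht
      rw [(hd t).deriv]
      have := Real.sinh_nonneg_iff.mpr ht.le
      nlinarith
  have h0 : (0 : ℝ) ∈ Set.Ici (0:ℝ) := Set.self_mem_Ici
  have := mono h0 hx hx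
  simpa using this

private lemma mul_cos_le_sin {θ : ℝ} (h0 : 0 ≤ θ) (h1 : θ ≤ π / 2) :
    θ * Real.cos θ ≤ Real.sin θ := by
  rcases lt_or_eq_of_le h1 with h | h
  · have hc : 0 < Real.cos θ := Real.cos_pos_of_mem_Ioo ⟨by linarith [Real.pi_pos], h⟩
    have := Real.le_tan h0 h
    rw [Real.tan_eq_sin_div_cos, le_div_iff₀ hc] at this
    linarith
  · simp [h]

private lemma key_ineq {s θ : ℝ} (hs : 0 ≤ s) (hθ0 : 0 ≤ θ) (hθ1 : θ ≤ π / 2) :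
    Real.cosh (Real.sqrt (s ^ 2 + θ ^ 2)) * Real.cos θ ≤ Real.cosh s := by
  have anti : AntitoneOn (fun t : ℝ => Real.cosh (Real.sqrt (s ^ 2 + t ^ 2)) * Real.cos t)
      (Set.Icc 0 (π / 2)) := by
    have hd : ∀ t : ℝ, 0 < t → HasDerivAt
        (fun t : ℝ => Real.cosh (Real.sqrt (s ^ 2 + t ^ 2)) * Real.cos t)
        (Real.sinh (Real.sqrt (s ^ 2 + t ^ 2)) * (1 / (2 * Real.sqrt (s ^ 2 + t ^ 2)) * (2 * t))
          * Real.cos t + Real.cosh (Real.sqrt (s ^ 2 + t ^ 2)) * (-Real.sin t)) t := by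
      intro t ht0
      have hpos : 0 < s ^ 2 + t ^ 2 := by positivity
      have h1 : HasDerivAt (fun t : ℝ => s ^ 2 + t ^ 2) (2 * t) t := by
        simpa using (hasDerivAt_pow 2 t).const_add (s ^ 2)
      have h2 : HasDerivAt (fun t : ℝ => Real.sqrt (s ^ 2 + t ^ 2))
          (1 / (2 * Real.sqrt (s ^ 2 + t ^ 2)) * (2 * t)) t :=
        (Real.hasDerivAt_sqrt hpos.ne').comp t h1
      have h3 := (Real.hasDerivAt_cosh (Real.sqrt (s ^ 2 + t ^ 2))).comp t h2
      exact h3.mul (Real.hasDerivAt_cos t)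
    apply antitoneOn_of_deriv_nonpos (convex_Icc 0 (π/2))
    · exact ((Real.continuous_cosh.comp (continuous_sqrt.comp
        (continuous_const.add (continuous_pow 2)))).mul Real.continuous_cos).continuousOn
    · intro t ht
      rw [interior_Icc] at ht
      exact (hd t ht.1).differentiableAt.differentiableWithinAt
    · intro t ht
      rw [interior_Icc] at ht
      obtain ⟨ht0, ht1⟩ := ht
      have hpos : 0 < s ^ 2 + t ^ 2 := by positivity
      set R := Real.sqrt (s ^ 2 + t ^ 2) with hR
      have hRpos : 0 < R := Real.sqrt_pos.mpr hpos
      have hRt : t ≤ R := by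
        rw [hR]
        calc t = Real.sqrt (t ^ 2) := by rw [Real.sqrt_sq ht0.le]
        _ ≤ Real.sqrt (s ^ 2 + t ^ 2) := Real.sqrt_le_sqrt (by nlinarith)
      rw [(hd t ht0).deriv]
      have hcos : 0 < Real.cos t := Real.cos_pos_of_mem_Ioo ⟨by linarith [Real.pi_pos], ht1⟩
      have key1 : Real.sinh R ≤ R * Real.cosh R := sinh_le_mul_cosh hRpos.le
      have key2 : t * Real.cos t ≤ Real.sin t := mul_cos_le_sin ht0.le ht1.le
      have hsinh : 0 ≤ Real.sinh R := Real.sinh_nonneg_iff.mpr hRpos.le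
      have hcosh : (0:ℝ) < Real.cosh R := Real.cosh_pos R
      have expand : Real.sinh R * (1 / (2 * R) * (2 * t)) * Real.cos t
          = (Real.sinh R / R) * (t * Real.cos t) := by field_simp
      rw [expand]
      have hb1 : Real.sinh R / R ≤ Real.cosh R := by
        rw [div_le_iff₀ hRpos]; linarith [key1]
      have hb2 : (Real.sinh R / R) * (t * Real.cos t) ≤ Real.cosh R * Real.sin t :=
        mul_le_mul hb1 key2 (by positivity) hcosh.le
      linarith
  have h0mem : (0:ℝ) ∈ Set.Icc 0 (π/2) := ⟨le_refl _, by linarith [Real.pi_pos]⟩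
  have hmem : θ ∈ Set.Icc 0 (π/2) := ⟨hθ0, hθ1⟩
  have := anti h0mem hmem hθ0
  simpa [Real.sqrt_sq hs] using this

theorem stmt_8 (C : ℝ) (h1 : 1 / Real.exp 1 ≤ C)
    (h2 : C ≤ (Real.exp 1 + 1 / Real.exp 1) / 2) :
    ∀ w : ℂ, ‖w - (C:ℂ)‖ < C - 1 / Real.exp 1 →
      w ≠ 0 ∧ ‖Complex.log w‖ < 1 := by
  intro w hw
  set e1 := Real.exp 1 with he1
  have hepos : 0 < e1 := Real.exp_pos 1
  have he_gt : 1 < e1 := by rw [he1]; have := Real.add_one_le_exp 1; linarith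
  set C₀ : ℝ := (e1 + 1 / e1) / 2 with hC₀
  -- reduce to the largest disc
  have hwC₀ : ‖w - (C₀:ℂ)‖ < C₀ - 1 / e1 := by
    have tri : ‖w - (C₀:ℂ)‖ ≤ ‖w - (C:ℂ)‖ + ‖(C:ℂ) - (C₀:ℂ)‖ := by
      have : w - (C₀:ℂ) = (w - (C:ℂ)) + ((C:ℂ) - (C₀:ℂ)) := by ring
      rw [this]; exact norm_add_le _ _
    have habs : ‖(C:ℂ) - (C₀:ℂ)‖ = C₀ - C := by
      rw [← Complex.ofReal_sub, Complex.norm_real, Real.norm_eq_abs, abs_of_nonpos (by linarith)]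
      ring
    rw [habs] at tri
    linarith
  -- |w| bounds
  have hrlow : 1 / e1 < ‖w‖ := by
    have tri : ‖(C₀:ℂ)‖ ≤ ‖w‖ + ‖(C₀:ℂ) - w‖ := by
      have : (C₀:ℂ) = w + ((C₀:ℂ) - w) := by ring
      nth_rewrite 1 [this]; exact norm_add_le _ _
    have h₁ : ‖(C₀:ℂ)‖ = C₀ := by
      rw [Complex.norm_real, Real.norm_eq_abs, abs_of_pos]; positivity
    have h₂ : ‖(C₀:ℂ) - w‖ = ‖w - (C₀:ℂ)‖ := by
      exact norm_sub_rev _ _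
    rw [h₁, h₂] at tri
    linarith
  have hw0 : w ≠ 0 := by
    intro h
    rw [h] at hrlow
    simp at hrlow
    have : 0 < 1 / e1 := by positivity
    linarith
  refine ⟨hw0, ?_⟩
  set r : ℝ := ‖w‖ with hr
  have hrpos : 0 < r := lt_trans (by positivity) hrlow
  set θ : ℝ := Complex.arg w with hθ
  set s : ℝ := Real.log r with hs
  -- the disc condition: r² + 1 < 2 C₀ (r cos θ)
  have hkey : r ^ 2 + 1 < 2 * C₀ * (r * Real.cos θ) := by
    have hsq : ‖w - (C₀:ℂ)‖ ^ 2 < (C₀ - 1 / e1) ^ 2 := by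
      apply sq_lt_sq' _ hwC₀
      have : 0 ≤ ‖w - (C₀:ℂ)‖ := norm_nonneg _
      linarith
    rw [Complex.sq_norm, Complex.normSq_apply] at hsq
    have hre : (w - (C₀:ℂ)).re = w.re - C₀ := by simp
    have him : (w - (C₀:ℂ)).im = w.im := by simp
    rw [hre, him] at hsq
    have hrcos : r * Real.cos θ = w.re := Complex.norm_mul_cos_arg w
    have hr2 : r ^ 2 = w.re * w.re + w.im * w.im := by
      rw [hr, ← Complex.normSq_apply, ← Complex.sq_norm]
    have hC0e : 2 * C₀ * (1 / e1) = 1 + 1 / e1 ^ 2 := by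
      rw [hC₀]; field_simp
    rw [hrcos, hr2]
    have hinv : (1 / e1) ^ 2 = 1 / e1 ^ 2 := by field_simp
    nlinarith [hsq]
  -- translate to cosh s < cosh 1 * cos θ
  have hres : r = Real.exp s := (Real.exp_log hrpos).symm
  have hcoshs : Real.cosh s = (r + 1 / r) / 2 := by
    rw [Real.cosh_eq, hres, Real.exp_neg]
    field_simp
  have hcosh1 : Real.cosh 1 = C₀ := by
    rw [Real.cosh_eq, hC₀, he1, Real.exp_neg]
    field_simp
  have hmain : Real.cosh s < Real.cosh 1 * Real.cos θ := by
    rw [hcoshs, hcosh1]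
    rw [div_lt_iff₀ (by norm_num : (0:ℝ) < 2)]
    have h := hkey
    have : r + 1 / r < 2 * C₀ * Real.cos θ := by
      rw [← mul_lt_mul_iff_right₀ hrpos]
      have hexp : r * (r + 1 / r) = r ^ 2 + 1 := by field_simp
      rw [hexp]
      calc r ^ 2 + 1 < 2 * C₀ * (r * Real.cos θ) := h
        _ = r * (2 * C₀ * Real.cos θ) := by ring
    linarith
  -- cos θ > 0 hence |θ| < π/2
  have hcosθ : 0 < Real.cos θ := by
    by_contra h
    push_neg at h
    have h1' : (1:ℝ) ≤ Real.cosh s := Real.one_le_cosh s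
    have : Real.cosh 1 * Real.cos θ ≤ 0 :=
      mul_nonpos_of_nonneg_of_nonpos (Real.cosh_pos 1).le h
    linarith
  have hθpi : |θ| < π / 2 := by
    by_contra h
    push_neg at h
    have hle : |θ| ≤ π := Complex.abs_arg_le_pi w
    have : Real.cos |θ| ≤ 0 :=
      Real.cos_nonpos_of_pi_div_two_le_of_le h (by linarith [Real.pi_pos])
    rw [Real.cos_abs] at this
    linarith
  -- conclude
  have hgoal : s ^ 2 + θ ^ 2 < 1 := by
    by_contra h
    push_neg at h
    have happ := key_ineq (abs_nonneg s) (abs_nonneg θ) hθpi.le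
    rw [_root_.sq_abs, _root_.sq_abs, Real.cos_abs, Real.cosh_abs] at happ
    have hsqrt : 1 ≤ Real.sqrt (s ^ 2 + θ ^ 2) := by
      rw [show (1:ℝ) = Real.sqrt 1 by simp]
      exact Real.sqrt_le_sqrt h
    have hcc : Real.cosh 1 ≤ Real.cosh (Real.sqrt (s ^ 2 + θ ^ 2)) := by
      rw [Real.cosh_le_cosh, _root_.abs_of_nonneg (by norm_num : (0:ℝ) ≤ 1),
        _root_.abs_of_nonneg (Real.sqrt_nonneg _)]
      exact hsqrt
    have : Real.cosh 1 * Real.cos θ ≤ Real.cosh (Real.sqrt (s ^ 2 + θ ^ 2)) * Real.cos θ :=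
      mul_le_mul_of_nonneg_right hcc hcosθ.le
    linarith
  have habslog : ‖Complex.log w‖ = Real.sqrt (s ^ 2 + θ ^ 2) := by
    rw [Complex.norm_def, Complex.normSq_apply, Complex.log_re, Complex.log_im]
    rw [← hr, ← hθ, ← hs]
    ring_nf
  rw [habslog]
  rw [show (1:ℝ) = Real.sqrt 1 by simp]
  exact Real.sqrt_lt_sqrt (by positivity) hgoal
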